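/- arXiv:1408.1181 — 6 statements merged into one kernel-verified Lean document; each statement's English description precedes it below -/
import Mathlib

section
/- Let C be a 2-analogue of the Fano plane in F_2^7 and S a fixed 4-dimensional subspace containing no member of C. Let a_i = #{U ∈ C : dim(U ∩ S) = i}. Then (a_0, a_1, a_2, a_3) = (136, 210, 35, 0). -/
open Finset Module Submodule

abbrev VV := Fin 7 → ZMod 2

private lemma arithA1 {a : ℕ} (h : a * 6 = (2 ^ 3 - 1) * (2 ^ 3 - 2)) : a = 7 := by
  norm_num at h; omega
private lemma arithA2 {a : ℕ} (h : a * 6 = (2 ^ 7 - 1) * (2 ^ 7 - 2)) : a = 2667 := by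
  norm_num at h; omega
private lemma arithA3 {a : ℕ} (h : a * 2 = 2 ^ 3 - 2) : a = 3 := by norm_num at h; omega
private lemma arithA4 {a : ℕ} (h : a * 2 = 2 ^ 7 - 2) : a = 63 := by norm_num at h; omega
private lemma arithA5 {a : ℕ} (h : a * 3 = 63) : a = 21 := by omega
private lemma arithA6 {a : ℕ} (h : a * 7 = 2667) : a = 381 := by omega
private lemma arithA7 {a : ℕ} (h : a * 6 = (2 ^ 4 - 1) * (2 ^ 4 - 2)) : a = 35 := by
  norm_num at h; omega
private lemma arithFinal {q : ℕ → ℕ}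
    (h1 : ∑ i ∈ Finset.range 4, q i * 1 = 381)
    (h2 : ∑ i ∈ Finset.range 4, q i * (2 ^ i - 1) = 315)
    (h3 : q 2 = 35) (h4 : q 3 = 0) : q 0 = 136 ∧ q 1 = 210 := by
  simp [Finset.sum_range_succ] at h1 h2
  omega
private lemma arithA9 {a : ℕ} (h1 : 2 ≤ a) (h2 : a ≤ 3) (h3 : a ≠ 3) : a = 2 := by omega
private lemma arithA8 {a0 a1 a2 a3 : ℕ} (h1 : a0 + a1 + a2 + a3 = 381)
    (h2 : a1 + a2 * 3 + a3 * 7 = 315) (h3 : a2 = 35) (h4 : a3 = 0) :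
    a0 = 136 ∧ a1 = 210 := by omega

section FanoCounting

attribute [local instance 2000] Classical.propDecidable



noncomputable instance : Fintype (Submodule (ZMod 2) VV) := Fintype.ofFinite _

lemma cardW (W : Submodule (ZMod 2) VV) :
    (univ.filter (fun x : VV => x ∈ W)).card = 2 ^ finrank (ZMod 2) W := by
  have h := card_eq_pow_finrank (K := ZMod 2) (V := W)
  rw [ZMod.card] at h
  rw [← h, Fintype.card_subtype]

lemma cardW1 (W : Submodule (ZMod 2) VV) {a : VV} (ha : a ∈ W) :
    (univ.filter (fun x : VV => x ∈ W ∧ x ≠ a)).card = 2 ^ finrank (ZMod 2) W - 1 := by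
  have : (univ.filter (fun x : VV => x ∈ W ∧ x ≠ a)) =
      (univ.filter (fun x : VV => x ∈ W)) \ {a} := by
    ext x; simp [and_comm]
  rw [this, Finset.card_sdiff_of_subset (by simp [ha]), cardW]
  simp

lemma cardW2 (W : Submodule (ZMod 2) VV) {a b : VV} (ha : a ∈ W) (hb : b ∈ W) (hab : a ≠ b) :
    (univ.filter (fun x : VV => x ∈ W ∧ x ≠ a ∧ x ≠ b)).card = 2 ^ finrank (ZMod 2) W - 2 := by
  have : (univ.filter (fun x : VV => x ∈ W ∧ x ≠ a ∧ x ≠ b)) =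
      (univ.filter (fun x : VV => x ∈ W)) \ {a, b} := by
    ext x
    simp only [mem_filter, mem_univ, true_and, mem_sdiff, mem_insert, mem_singleton]
    tauto
  rw [this, Finset.card_sdiff_of_subset (by simp [Finset.insert_subset_iff, ha, hb]), cardW,
    Finset.card_pair hab]

lemma card_pairs_fst {α β : Type*} [Fintype α] [Fintype β] (R : α → β → Prop) (x : α) :
    (univ.filter (fun p : α × β => p.1 = x ∧ R x p.2)).card
      = (univ.filter (fun y => R x y)).card := by
  apply Finset.card_bij' (fun p _ => p.2) (fun y _ => (x, y)) <;> simp +contextual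

lemma card_pairs_snd {α β : Type*} [Fintype α] [Fintype β] (R : α → β → Prop) (y : β) :
    (univ.filter (fun p : α × β => p.2 = y ∧ R p.1 y)).card
      = (univ.filter (fun x => R x y)).card := by
  apply Finset.card_bij' (fun p _ => p.1) (fun x _ => (x, y)) <;> simp +contextual

lemma spanZ2 (x y : VV) : y ∈ Submodule.span (ZMod 2) {x} ↔ y = 0 ∨ y = x := by
  rw [Submodule.mem_span_singleton]
  constructor
  · rintro ⟨a, rfl⟩; fin_cases a; exacts [Or.inl (zero_smul _ x), Or.inr (one_smul _ x)]
  · rintro (rfl | rfl); exact ⟨0, by simp⟩; exact ⟨1, by simp⟩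

lemma rank2span {x y : VV} (hx : x ≠ 0) (hy : y ≠ 0) (hxy : y ≠ x) :
    finrank (ZMod 2) (Submodule.span (ZMod 2) {x, y}) = 2 := by
  have hli : LinearIndependent (ZMod 2) ![y, x] := by
    rw [linearIndependent_fin2]
    refine ⟨by simpa using hx, fun a => ?_⟩
    fin_cases a
    · show ¬ (0 : ZMod 2) • x = y; simpa using Ne.symm hy
    · show ¬ (1 : ZMod 2) • x = y; simpa using Ne.symm hxy
  have : Submodule.span (ZMod 2) {x, y} = Submodule.span (ZMod 2) (Set.range ![y, x]) := by
    congr 1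
    simp [Set.pair_comm]
  rw [this, finrank_span_eq_card hli]
  simp

set_option maxRecDepth 8000 in
lemma cardD (W : Submodule (ZMod 2) VV) :
    (univ.filter (fun p : VV × VV => p.1 ∈ W ∧ p.1 ≠ 0 ∧ p.2 ∈ W ∧ p.2 ≠ 0 ∧ p.2 ≠ p.1)).card
      = (2 ^ finrank (ZMod 2) W - 1) * (2 ^ finrank (ZMod 2) W - 2) := by
  have H : ∀ p ∈ (univ.filter
      (fun p : VV × VV => p.1 ∈ W ∧ p.1 ≠ 0 ∧ p.2 ∈ W ∧ p.2 ≠ 0 ∧ p.2 ≠ p.1)),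
      Prod.fst p ∈ (univ.filter (fun x : VV => x ∈ W ∧ x ≠ 0)) := by
    intro p hp
    simp only [mem_filter, mem_univ, true_and] at hp ⊢
    exact ⟨hp.1, hp.2.1⟩
  have hfib : ∀ x ∈ (univ.filter (fun x : VV => x ∈ W ∧ x ≠ 0)),
      ((univ.filter
        (fun p : VV × VV => p.1 ∈ W ∧ p.1 ≠ 0 ∧ p.2 ∈ W ∧ p.2 ≠ 0 ∧ p.2 ≠ p.1)).filter
        (fun p => Prod.fst p = x)).card = 2 ^ finrank (ZMod 2) W - 2 := by
    intro x hx
    simp only [mem_filter, mem_univ, true_and] at hx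
    have he : ((univ.filter
        (fun p : VV × VV => p.1 ∈ W ∧ p.1 ≠ 0 ∧ p.2 ∈ W ∧ p.2 ≠ 0 ∧ p.2 ≠ p.1)).filter
        (fun p => Prod.fst p = x)) =
        univ.filter (fun p : VV × VV => p.1 = x ∧ (p.2 ∈ W ∧ p.2 ≠ 0 ∧ p.2 ≠ x)) := by
      ext p
      simp only [mem_filter, mem_univ, true_and]
      constructor
      · rintro ⟨⟨h1, h2, h3, h4, h5⟩, rfl⟩
        exact ⟨rfl, h3, h4, h5⟩
      · rintro ⟨rfl, h3, h4, h5⟩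
        exact ⟨⟨hx.1, hx.2, h3, h4, h5⟩, rfl⟩
    rw [he]
    exact (card_pairs_fst (fun x y => y ∈ W ∧ y ≠ 0 ∧ y ≠ x) x).trans
      (cardW2 W W.zero_mem hx.1 (Ne.symm hx.2))
  rw [Finset.card_eq_sum_card_fiberwise H, Finset.sum_congr rfl hfib, Finset.sum_const,
    smul_eq_mul, cardW1 W W.zero_mem]
set_option maxRecDepth 8000 in
lemma count2 (W : Submodule (ZMod 2) VV) :
    (univ.filter (fun T : Submodule (ZMod 2) VV =>
      T ≤ W ∧ finrank (ZMod 2) T = 2)).card * 6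
      = (2 ^ finrank (ZMod 2) W - 1) * (2 ^ finrank (ZMod 2) W - 2) := by
  rw [← cardD W]
  have H : ∀ p ∈ (univ.filter
      (fun p : VV × VV => p.1 ∈ W ∧ p.1 ≠ 0 ∧ p.2 ∈ W ∧ p.2 ≠ 0 ∧ p.2 ≠ p.1)),
      Submodule.span (ZMod 2) {p.1, p.2} ∈ (univ.filter (fun T : Submodule (ZMod 2) VV =>
        T ≤ W ∧ finrank (ZMod 2) T = 2)) := by
    intro p hp
    simp only [mem_filter, mem_univ, true_and] at hp ⊢
    exact ⟨Submodule.span_le.2 (by simp [Set.insert_subset_iff, hp.1, hp.2.2.1]),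
      rank2span hp.2.1 hp.2.2.2.1 hp.2.2.2.2⟩
  have hfib : ∀ T ∈ (univ.filter (fun T : Submodule (ZMod 2) VV =>
      T ≤ W ∧ finrank (ZMod 2) T = 2)),
      ((univ.filter
        (fun p : VV × VV => p.1 ∈ W ∧ p.1 ≠ 0 ∧ p.2 ∈ W ∧ p.2 ≠ 0 ∧ p.2 ≠ p.1)).filter
        (fun p => Submodule.span (ZMod 2) {p.1, p.2} = T)).card = 6 := by
    intro T hT
    simp only [mem_filter, mem_univ, true_and] at hT
    have he : ((univ.filter
        (fun p : VV × VV => p.1 ∈ W ∧ p.1 ≠ 0 ∧ p.2 ∈ W ∧ p.2 ≠ 0 ∧ p.2 ≠ p.1)).filter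
        (fun p => Submodule.span (ZMod 2) {p.1, p.2} = T)) =
        univ.filter (fun p : VV × VV => p.1 ∈ T ∧ p.1 ≠ 0 ∧ p.2 ∈ T ∧ p.2 ≠ 0 ∧ p.2 ≠ p.1) := by
      ext p
      simp only [mem_filter, mem_univ, true_and]
      constructor
      · rintro ⟨⟨_, h2, _, h4, h5⟩, hsp⟩
        exact ⟨hsp ▸ Submodule.subset_span (by simp), h2,
          hsp ▸ Submodule.subset_span (by simp), h4, h5⟩
      · rintro ⟨h1, h2, h3, h4, h5⟩
        refine ⟨⟨hT.1 h1, h2, hT.1 h3, h4, h5⟩, ?_⟩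
        apply eq_of_le_of_finrank_eq
          (Submodule.span_le.2 (by simp [Set.insert_subset_iff, h1, h3]))
        rw [rank2span h2 h4 h5, hT.2]
    rw [he, cardD T, hT.2]; norm_num
  rw [Finset.card_eq_sum_card_fiberwise H, Finset.sum_congr rfl hfib, Finset.sum_const,
    smul_eq_mul]

set_option maxRecDepth 8000 in
lemma count2pt (W : Submodule (ZMod 2) VV) {x : VV} (hxW : x ∈ W) (hx0 : x ≠ 0) :
    (univ.filter (fun T : Submodule (ZMod 2) VV =>
      T ≤ W ∧ finrank (ZMod 2) T = 2 ∧ x ∈ T)).card * 2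
      = 2 ^ finrank (ZMod 2) W - 2 := by
  rw [← cardW2 W W.zero_mem hxW (Ne.symm hx0)]
  have H : ∀ y ∈ (univ.filter (fun y : VV => y ∈ W ∧ y ≠ 0 ∧ y ≠ x)),
      Submodule.span (ZMod 2) {x, y} ∈ (univ.filter (fun T : Submodule (ZMod 2) VV =>
        T ≤ W ∧ finrank (ZMod 2) T = 2 ∧ x ∈ T)) := by
    intro y hy
    simp only [mem_filter, mem_univ, true_and] at hy ⊢
    exact ⟨Submodule.span_le.2 (by simp [Set.insert_subset_iff, hxW, hy.1]),
      rank2span hx0 hy.2.1 hy.2.2, Submodule.subset_span (by simp)⟩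
  have hfib : ∀ T ∈ (univ.filter (fun T : Submodule (ZMod 2) VV =>
      T ≤ W ∧ finrank (ZMod 2) T = 2 ∧ x ∈ T)),
      ((univ.filter (fun y : VV => y ∈ W ∧ y ≠ 0 ∧ y ≠ x)).filter
        (fun y => Submodule.span (ZMod 2) {x, y} = T)).card = 2 := by
    intro T hT
    simp only [mem_filter, mem_univ, true_and] at hT
    have he : ((univ.filter (fun y : VV => y ∈ W ∧ y ≠ 0 ∧ y ≠ x)).filter
        (fun y => Submodule.span (ZMod 2) {x, y} = T)) =
        univ.filter (fun y : VV => y ∈ T ∧ y ≠ 0 ∧ y ≠ x) := by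
      ext y
      simp only [mem_filter, mem_univ, true_and]
      constructor
      · rintro ⟨⟨_, h2, h3⟩, hsp⟩
        exact ⟨hsp ▸ Submodule.subset_span (by simp), h2, h3⟩
      · rintro ⟨h1, h2, h3⟩
        refine ⟨⟨hT.1 h1, h2, h3⟩, ?_⟩
        apply eq_of_le_of_finrank_eq
          (Submodule.span_le.2 (by simp [Set.insert_subset_iff, hT.2.2, h1]))
        rw [rank2span hx0 h2 h3, hT.2.1]
    rw [he, cardW2 T T.zero_mem hT.2.2 (Ne.symm hx0), hT.2.1]; norm_num
  rw [Finset.card_eq_sum_card_fiberwise H, Finset.sum_congr rfl hfib, Finset.sum_const,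
    smul_eq_mul]
set_option maxRecDepth 8000 in
/-- Intersection vector of a solid containing no codeword, with respect to a `2`-analogue of
the Fano plane: `(a_0, a_1, a_2, a_3) = (136, 210, 35, 0)`. -/
theorem fano_analogue_intersection_vector_no_codeword
    (C : Set (Submodule (ZMod 2) (Fin 7 → ZMod 2)))
    (h3 : ∀ U ∈ C, Module.finrank (ZMod 2) U = 3)
    (hSteiner : ∀ T : Submodule (ZMod 2) (Fin 7 → ZMod 2),
      Module.finrank (ZMod 2) T = 2 → ∃! U, U ∈ C ∧ T ≤ U)
    (S : Submodule (ZMod 2) (Fin 7 → ZMod 2)) (hS : Module.finrank (ZMod 2) S = 4)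
    (hno : ∀ U ∈ C, ¬ U ≤ S) :
    {U ∈ C | Module.finrank (ZMod 2) ↥(U ⊓ S) = 0}.ncard = 136 ∧
    {U ∈ C | Module.finrank (ZMod 2) ↥(U ⊓ S) = 1}.ncard = 210 ∧
    {U ∈ C | Module.finrank (ZMod 2) ↥(U ⊓ S) = 2}.ncard = 35 ∧
    {U ∈ C | Module.finrank (ZMod 2) ↥(U ⊓ S) = 3}.ncard = 0 := by
  -- notation
  have hTop : finrank (ZMod 2) (⊤ : Submodule (ZMod 2) VV) = 7 := by
    rw [finrank_top]; exact Module.finrank_fin_fun (ZMod 2)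
  -- the choice function
  have hrex : ∀ T : Submodule (ZMod 2) VV, ∃ U : Submodule (ZMod 2) VV,
      finrank (ZMod 2) T = 2 → U ∈ C ∧ T ≤ U := by
    intro T
    by_cases h : finrank (ZMod 2) T = 2
    · obtain ⟨U, hU, -⟩ := hSteiner T h
      exact ⟨U, fun _ => hU⟩
    · exact ⟨⊤, fun h' => absurd h' h⟩
  choose r hr using hrex
  have hruniq : ∀ T : Submodule (ZMod 2) VV, finrank (ZMod 2) T = 2 →
      ∀ U, U ∈ C → T ≤ U → U = r T := by
    intro T h U hU hTU
    exact (hSteiner T h).unique ⟨hU, hTU⟩ ⟨(hr T h).1, (hr T h).2⟩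
  -- conversion of goal
  have hncard : ∀ i : ℕ, {U ∈ C | finrank (ZMod 2) ↥(U ⊓ S) = i}.ncard =
      (univ.filter (fun U : Submodule (ZMod 2) VV =>
        U ∈ C ∧ finrank (ZMod 2) ↥(U ⊓ S) = i)).card := by
    intro i
    rw [show {U ∈ C | finrank (ZMod 2) ↥(U ⊓ S) = i} =
      ↑(univ.filter (fun U : Submodule (ZMod 2) VV =>
        U ∈ C ∧ finrank (ZMod 2) ↥(U ⊓ S) = i)) by ext U; simp, Set.ncard_coe_finset]
  -- basic counts inside codewords
  have hC7 : ∀ U ∈ C, (univ.filter (fun T : Submodule (ZMod 2) VV =>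
      T ≤ U ∧ finrank (ZMod 2) T = 2)).card = 7 := by
    intro U hU
    have := count2 U
    rw [h3 U hU] at this
    exact arithA1 this
  have hC3pt : ∀ U ∈ C, ∀ x ∈ U, x ≠ 0 → (univ.filter (fun T : Submodule (ZMod 2) VV =>
      T ≤ U ∧ finrank (ZMod 2) T = 2 ∧ x ∈ T)).card = 3 := by
    intro U hU x hx hx0
    have := count2pt U hx hx0
    rw [h3 U hU] at this
    exact arithA3 this
  -- number of codewords
  have hCcard : (univ.filter (fun U : Submodule (ZMod 2) VV => U ∈ C)).card = 381 := by
    have hB : (univ.filter (fun T : Submodule (ZMod 2) VV =>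
        T ≤ (⊤ : Submodule (ZMod 2) VV) ∧ finrank (ZMod 2) T = 2)).card = 2667 := by
      have := count2 (⊤ : Submodule (ZMod 2) VV)
      rw [hTop] at this
      exact arithA2 this
    have H : ∀ T ∈ (univ.filter (fun T : Submodule (ZMod 2) VV =>
        T ≤ (⊤ : Submodule (ZMod 2) VV) ∧ finrank (ZMod 2) T = 2)),
        r T ∈ (univ.filter (fun U : Submodule (ZMod 2) VV => U ∈ C)) := by
      intro T hT
      simp only [mem_filter, mem_univ, true_and] at hT ⊢
      exact (hr T hT.2).1
    have hfib : ∀ U ∈ (univ.filter (fun U : Submodule (ZMod 2) VV => U ∈ C)),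
        ((univ.filter (fun T : Submodule (ZMod 2) VV =>
          T ≤ (⊤ : Submodule (ZMod 2) VV) ∧ finrank (ZMod 2) T = 2)).filter
          (fun T => r T = U)).card = 7 := by
      intro U hU
      simp only [mem_filter, mem_univ, true_and] at hU
      have he : ((univ.filter (fun T : Submodule (ZMod 2) VV =>
          T ≤ (⊤ : Submodule (ZMod 2) VV) ∧ finrank (ZMod 2) T = 2)).filter
          (fun T => r T = U)) = univ.filter (fun T : Submodule (ZMod 2) VV =>
          T ≤ U ∧ finrank (ZMod 2) T = 2) := by
        ext T
        simp only [mem_filter, mem_univ, true_and]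
        constructor
        · rintro ⟨⟨-, h2⟩, rfl⟩
          exact ⟨(hr T h2).2, h2⟩
        · rintro ⟨h1, h2⟩
          exact ⟨⟨le_top, h2⟩, (hruniq T h2 U hU h1).symm⟩
      rw [he, hC7 U hU]
    rw [Finset.card_eq_sum_card_fiberwise H, Finset.sum_congr rfl hfib, Finset.sum_const,
      smul_eq_mul] at hB
    exact arithA6 hB
  -- 21 codewords through each nonzero point
  have hpt21 : ∀ x : VV, x ≠ 0 → (univ.filter (fun U : Submodule (ZMod 2) VV =>
      U ∈ C ∧ x ∈ U)).card = 21 := by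
    intro x hx0
    have hB : (univ.filter (fun T : Submodule (ZMod 2) VV =>
        T ≤ (⊤ : Submodule (ZMod 2) VV) ∧ finrank (ZMod 2) T = 2 ∧ x ∈ T)).card = 63 := by
      have := count2pt (⊤ : Submodule (ZMod 2) VV) (mem_top (x := x)) hx0
      rw [hTop] at this
      exact arithA4 this
    have H : ∀ T ∈ (univ.filter (fun T : Submodule (ZMod 2) VV =>
        T ≤ (⊤ : Submodule (ZMod 2) VV) ∧ finrank (ZMod 2) T = 2 ∧ x ∈ T)),
        r T ∈ (univ.filter (fun U : Submodule (ZMod 2) VV => U ∈ C ∧ x ∈ U)) := by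
      intro T hT
      simp only [mem_filter, mem_univ, true_and] at hT ⊢
      exact ⟨(hr T hT.2.1).1, (hr T hT.2.1).2 hT.2.2⟩
    have hfib : ∀ U ∈ (univ.filter (fun U : Submodule (ZMod 2) VV => U ∈ C ∧ x ∈ U)),
        ((univ.filter (fun T : Submodule (ZMod 2) VV =>
          T ≤ (⊤ : Submodule (ZMod 2) VV) ∧ finrank (ZMod 2) T = 2 ∧ x ∈ T)).filter
          (fun T => r T = U)).card = 3 := by
      intro U hU
      simp only [mem_filter, mem_univ, true_and] at hU
      have he : ((univ.filter (fun T : Submodule (ZMod 2) VV =>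
          T ≤ (⊤ : Submodule (ZMod 2) VV) ∧ finrank (ZMod 2) T = 2 ∧ x ∈ T)).filter
          (fun T => r T = U)) = univ.filter (fun T : Submodule (ZMod 2) VV =>
          T ≤ U ∧ finrank (ZMod 2) T = 2 ∧ x ∈ T) := by
        ext T
        simp only [mem_filter, mem_univ, true_and]
        constructor
        · rintro ⟨⟨-, h2, h3'⟩, rfl⟩
          exact ⟨(hr T h2).2, h2, h3'⟩
        · rintro ⟨h1, h2, h3'⟩
          exact ⟨⟨le_top, h2, h3'⟩, (hruniq T h2 U hU.1 h1).symm⟩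
      rw [he, hC3pt U hU.1 x hU.2 hx0]
    rw [Finset.card_eq_sum_card_fiberwise H, Finset.sum_congr rfl hfib, Finset.sum_const,
      smul_eq_mul] at hB
    exact arithA5 hB
  -- dimension bounds
  have hd3 : ∀ U ∈ C, finrank (ZMod 2) ↥(U ⊓ S) ≤ 3 := by
    intro U hU
    have h := Submodule.finrank_mono (R := ZMod 2) (M := VV) (inf_le_left (a := U) (b := S))
    rwa [h3 U hU] at h
  have hne3 : ∀ U ∈ C, finrank (ZMod 2) ↥(U ⊓ S) ≠ 3 := by
    intro U hU h
    apply hno U hU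
    have he : U ⊓ S = U := eq_of_le_of_finrank_eq inf_le_left (by rw [h, h3 U hU])
    rw [← he]
    exact inf_le_right
  have ha3 : (univ.filter (fun U : Submodule (ZMod 2) VV =>
      U ∈ C ∧ finrank (ZMod 2) ↥(U ⊓ S) = 3)).card = 0 := by
    rw [Finset.card_eq_zero, Finset.filter_eq_empty_iff]
    intro U _
    rintro ⟨hU, h⟩
    exact hne3 U hU h
  -- a2 = 35
  have ha2 : (univ.filter (fun U : Submodule (ZMod 2) VV =>
      U ∈ C ∧ finrank (ZMod 2) ↥(U ⊓ S) = 2)).card = 35 := by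
    have hbij : (univ.filter (fun U : Submodule (ZMod 2) VV =>
        U ∈ C ∧ finrank (ZMod 2) ↥(U ⊓ S) = 2)).card =
        (univ.filter (fun T : Submodule (ZMod 2) VV =>
          T ≤ S ∧ finrank (ZMod 2) T = 2)).card := by
      apply Finset.card_bij (fun U _ => U ⊓ S)
      · intro U hU
        simp only [mem_filter, mem_univ, true_and] at hU ⊢
        exact ⟨inf_le_right, hU.2⟩
      · intro U hU U' hU' heq
        simp only [mem_filter, mem_univ, true_and] at hU hU'
        have e1 := hruniq (U ⊓ S) hU.2 U hU.1 inf_le_left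
        have e2 := hruniq (U' ⊓ S) hU'.2 U' hU'.1 inf_le_left
        rw [heq] at e1
        exact e1.trans e2.symm
      · intro T hT
        simp only [mem_filter, mem_univ, true_and] at hT
        have hrT := hr T hT.2
        have hle : T ≤ r T ⊓ S := le_inf hrT.2 hT.1
        have h2le : 2 ≤ finrank (ZMod 2) ↥(r T ⊓ S) := by
          have h := Submodule.finrank_mono (R := ZMod 2) (M := VV) hle
          rwa [hT.2] at h
        have hd2 : finrank (ZMod 2) ↥(r T ⊓ S) = 2 :=
          arithA9 h2le (hd3 _ hrT.1) (hne3 _ hrT.1)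
        refine ⟨r T, ?_, ?_⟩
        · simp only [mem_filter, mem_univ, true_and]
          exact ⟨hrT.1, hd2⟩
        · exact (eq_of_le_of_finrank_eq hle (by rw [hT.2, hd2])).symm
    rw [hbij]
    have h := count2 S
    rw [hS] at h
    exact arithA7 h
  -- the fiberwise sum decomposition over C
  have hmaps : ∀ U ∈ (univ.filter (fun U : Submodule (ZMod 2) VV => U ∈ C)),
      finrank (ZMod 2) ↥(U ⊓ S) ∈ Finset.range 4 := by
    intro U hU
    simp only [mem_filter, mem_univ, true_and] at hU
    exact Finset.mem_range.2 (Nat.lt_succ_of_le (hd3 U hU))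
  have hsplit : ∀ g : ℕ → ℕ,
      (∑ U ∈ univ.filter (fun U : Submodule (ZMod 2) VV => U ∈ C),
        g (finrank (ZMod 2) ↥(U ⊓ S)))
      = ∑ i ∈ Finset.range 4, (univ.filter (fun U : Submodule (ZMod 2) VV =>
          U ∈ C ∧ finrank (ZMod 2) ↥(U ⊓ S) = i)).card * g i := by
    intro g
    rw [← Finset.sum_fiberwise_of_maps_to hmaps
      (fun U => g (finrank (ZMod 2) ↥(U ⊓ S)))]
    refine Finset.sum_congr rfl fun i _ => ?_
    have he : ((univ.filter (fun U : Submodule (ZMod 2) VV => U ∈ C)).filter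
        (fun U => finrank (ZMod 2) ↥(U ⊓ S) = i)) =
        univ.filter (fun U : Submodule (ZMod 2) VV =>
          U ∈ C ∧ finrank (ZMod 2) ↥(U ⊓ S) = i) := by
      ext U
      simp only [Finset.mem_filter, Finset.mem_univ, true_and]
    rw [he]
    rw [Finset.sum_congr rfl (fun U hU => by
      simp only [mem_filter, mem_univ, true_and] at hU
      rw [hU.2] : ∀ U ∈ univ.filter (fun U : Submodule (ZMod 2) VV =>
        U ∈ C ∧ finrank (ZMod 2) ↥(U ⊓ S) = i),
        g (finrank (ZMod 2) ↥(U ⊓ S)) = g i), Finset.sum_const, smul_eq_mul]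
  -- the incidence count
  have hP1 : (univ.filter (fun p : VV × Submodule (ZMod 2) VV =>
      p.2 ∈ C ∧ p.1 ∈ S ∧ p.1 ≠ 0 ∧ p.1 ∈ p.2)).card = 315 := by
    have H : ∀ p ∈ (univ.filter (fun p : VV × Submodule (ZMod 2) VV =>
        p.2 ∈ C ∧ p.1 ∈ S ∧ p.1 ≠ 0 ∧ p.1 ∈ p.2)),
        Prod.fst p ∈ univ.filter (fun x : VV => x ∈ S ∧ x ≠ 0) := by
      intro p hp
      simp only [mem_filter, mem_univ, true_and] at hp ⊢
      exact ⟨hp.2.1, hp.2.2.1⟩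
    have hfib : ∀ x ∈ univ.filter (fun x : VV => x ∈ S ∧ x ≠ 0),
        ((univ.filter (fun p : VV × Submodule (ZMod 2) VV =>
          p.2 ∈ C ∧ p.1 ∈ S ∧ p.1 ≠ 0 ∧ p.1 ∈ p.2)).filter
          (fun p => Prod.fst p = x)).card = 21 := by
      intro x hx
      simp only [mem_filter, mem_univ, true_and] at hx
      have he : ((univ.filter (fun p : VV × Submodule (ZMod 2) VV =>
          p.2 ∈ C ∧ p.1 ∈ S ∧ p.1 ≠ 0 ∧ p.1 ∈ p.2)).filter
          (fun p => Prod.fst p = x)) =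
          univ.filter (fun p : VV × Submodule (ZMod 2) VV =>
            p.1 = x ∧ (p.2 ∈ C ∧ x ∈ p.2)) := by
        ext p
        simp only [mem_filter, mem_univ, true_and]
        constructor
        · rintro ⟨⟨h1, _, _, h4⟩, rfl⟩
          exact ⟨rfl, h1, h4⟩
        · rintro ⟨rfl, h1, h4⟩
          exact ⟨⟨h1, hx.1, hx.2, h4⟩, rfl⟩
      rw [he]
      exact (card_pairs_fst (fun x U => U ∈ C ∧ x ∈ U) x).trans (hpt21 x hx.2)
    rw [Finset.card_eq_sum_card_fiberwise H, Finset.sum_congr rfl hfib, Finset.sum_const,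
      smul_eq_mul, cardW1 S S.zero_mem, hS]
    norm_num
  have hP2 : (univ.filter (fun p : VV × Submodule (ZMod 2) VV =>
      p.2 ∈ C ∧ p.1 ∈ S ∧ p.1 ≠ 0 ∧ p.1 ∈ p.2)).card =
      ∑ U ∈ univ.filter (fun U : Submodule (ZMod 2) VV => U ∈ C),
        (2 ^ finrank (ZMod 2) ↥(U ⊓ S) - 1) := by
    have H : ∀ p ∈ (univ.filter (fun p : VV × Submodule (ZMod 2) VV =>
        p.2 ∈ C ∧ p.1 ∈ S ∧ p.1 ≠ 0 ∧ p.1 ∈ p.2)),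
        Prod.snd p ∈ univ.filter (fun U : Submodule (ZMod 2) VV => U ∈ C) := by
      intro p hp
      simp only [mem_filter, mem_univ, true_and] at hp ⊢
      exact hp.1
    rw [Finset.card_eq_sum_card_fiberwise H]
    refine Finset.sum_congr rfl fun U hU => ?_
    simp only [mem_filter, mem_univ, true_and] at hU
    have he : ((univ.filter (fun p : VV × Submodule (ZMod 2) VV =>
        p.2 ∈ C ∧ p.1 ∈ S ∧ p.1 ≠ 0 ∧ p.1 ∈ p.2)).filter
        (fun p => Prod.snd p = U)) =
        univ.filter (fun p : VV × Submodule (ZMod 2) VV =>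
          p.2 = U ∧ (p.1 ∈ U ⊓ S ∧ p.1 ≠ 0)) := by
      ext p
      simp only [mem_filter, mem_univ, true_and, Submodule.mem_inf]
      constructor
      · rintro ⟨⟨_, h2, h3', h4⟩, rfl⟩
        exact ⟨rfl, ⟨h4, h2⟩, h3'⟩
      · rintro ⟨rfl, ⟨h4, h2⟩, h3'⟩
        exact ⟨⟨hU, h2, h3', h4⟩, rfl⟩
    rw [he]
    exact (card_pairs_snd (fun x U' => x ∈ U ⊓ S ∧ x ≠ 0) U).trans
      (cardW1 (U ⊓ S) (U ⊓ S).zero_mem)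
  -- assemble the two sums
  have hsum1 : ∑ i ∈ Finset.range 4, (univ.filter (fun U : Submodule (ZMod 2) VV =>
      U ∈ C ∧ finrank (ZMod 2) ↥(U ⊓ S) = i)).card * 1 = 381 := by
    rw [← hsplit (fun _ => 1), Finset.sum_const, smul_eq_mul, hCcard]
  have hsum2 : ∑ i ∈ Finset.range 4, (univ.filter (fun U : Submodule (ZMod 2) VV =>
      U ∈ C ∧ finrank (ZMod 2) ↥(U ⊓ S) = i)).card * (2 ^ i - 1) = 315 := by
    rw [← hsplit (fun i => 2 ^ i - 1), ← hP2]
    exact hP1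
  obtain ⟨h0, h1⟩ := arithFinal
    (q := fun i => (univ.filter (fun U : Submodule (ZMod 2) VV =>
      U ∈ C ∧ finrank (ZMod 2) ↥(U ⊓ S) = i)).card) hsum1 hsum2 ha2 ha3
  exact ⟨(hncard 0).trans h0, (hncard 1).trans h1, (hncard 2).trans ha2, (hncard 3).trans ha3⟩

end FanoCounting
end

section
/- Let C be a 2-analogue of the Fano plane in F_2^7 and S a fixed 4-dimensional subspace containing a member of C. With a_i = #{U ∈ C : dim(U∩S) = i}, the intersection vector is (a_0, a_1, a_2, a_3) = (128, 224, 28, 1). -/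
open Module Submodule

section counting
variable {α β : Type*} [Finite α]

lemma count_sum (A : Set α) (B : Finset β) (f : α → β) (g : β → ℕ)
    (hmap : ∀ a ∈ A, f a ∈ B) (hfib : ∀ b ∈ B, {a ∈ A | f a = b}.ncard = g b) :
    A.ncard = ∑ b ∈ B, g b := by
  classical
  have hA : A.Finite := Set.toFinite A
  rw [Set.ncard_eq_toFinset_card A hA]
  rw [Finset.card_eq_sum_card_fiberwise (f := f) (t := B)
    (by intro x hx; exact hmap x (hA.mem_toFinset.mp hx))]
  refine Finset.sum_congr rfl fun b hb => ?_
  rw [← hfib b hb]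
  have h : {a ∈ A | f a = b} = ↑(hA.toFinset.filter fun a => f a = b) := by
    ext a; simp
  rw [h, Set.ncard_coe_finset]

lemma count_fiber (A : Set α) (B : Set β) (f : α → β) (k : ℕ)
    (hmap : ∀ a ∈ A, f a ∈ B) (hB : B.Finite)
    (hfib : ∀ b ∈ B, {a ∈ A | f a = b}.ncard = k) :
    A.ncard = k * B.ncard := by
  classical
  rw [count_sum A hB.toFinset f (fun _ => k)
    (fun a ha => hB.mem_toFinset.mpr (hmap a ha))
    (fun b hb => hfib b (hB.mem_toFinset.mp hb))]
  rw [Finset.sum_const, Set.ncard_eq_toFinset_card B hB, smul_eq_mul, mul_comm]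

end counting

notation "K2" => ZMod 2
notation "V2" => ((Fin 7 : Type) → ZMod 2)

lemma cardW_s10 (W : Submodule K2 V2) : Nat.card W = 2 ^ finrank K2 W := by
  have : Fintype W := Fintype.ofFinite W
  rw [Nat.card_eq_fintype_card, card_eq_pow_finrank (K := K2), ZMod.card]

lemma ncardW (W : Submodule K2 V2) : (W : Set V2).ncard = 2 ^ finrank K2 W := by
  rw [← Nat.card_coe_set_eq, ← cardW_s10]; rfl

lemma mem_span_singleton_zmod2 {x y : V2} : y ∈ Submodule.span K2 {x} ↔ y = 0 ∨ y = x := by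
  rw [Submodule.mem_span_singleton]
  constructor
  · rintro ⟨a, rfl⟩
    have : a = 0 ∨ a = 1 := by revert a; decide
    rcases this with rfl | rfl <;> simp
  · rintro (rfl | rfl)
    · exact ⟨0, by simp⟩
    · exact ⟨1, by simp⟩

lemma span_pair_finrank {x y : V2} (hx : x ≠ 0) (hy : y ∉ Submodule.span K2 {x}) :
    finrank K2 (Submodule.span K2 {x, y}) = 2 := by
  have hy0 : y ≠ 0 := by rintro rfl; exact hy (Submodule.zero_mem _)
  have hinf : Submodule.span K2 {x} ⊓ Submodule.span K2 {y} = ⊥ := by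
    rw [eq_bot_iff]
    rintro z ⟨hz1, hz2⟩
    rcases mem_span_singleton_zmod2.mp hz1 with rfl | rfl
    · exact Submodule.zero_mem _
    · rcases mem_span_singleton_zmod2.mp hz2 with h | h
      · exact absurd h hx
      · rw [h] at hy; exact absurd (Submodule.mem_span_singleton_self _) hy
  have hsup : Submodule.span K2 {x, y} = Submodule.span K2 {x} ⊔ Submodule.span K2 {y} :=
    Submodule.span_insert x {y}
  have := Submodule.finrank_sup_add_finrank_inf_eq (Submodule.span K2 {x}) (Submodule.span K2 {y})
  rw [hinf, finrank_bot, finrank_span_singleton hx, finrank_span_singleton hy0] at this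
  rw [hsup]; omega

lemma planes_through (W : Submodule K2 V2) {x : V2} (hxW : x ∈ W) (hx0 : x ≠ 0) :
    2 * {T : Submodule K2 V2 | finrank K2 T = 2 ∧ x ∈ T ∧ T ≤ W}.ncard
      = 2 ^ finrank K2 W - 2 := by
  classical
  set B : Set (Submodule K2 V2) := {T | finrank K2 T = 2 ∧ x ∈ T ∧ T ≤ W} with hB
  have key := count_fiber {y : V2 | y ∈ W ∧ y ∉ Submodule.span K2 {x}} B
    (fun y => Submodule.span K2 {x, y}) 2 ?_ (Set.toFinite B) ?_
  · have hAle : (Submodule.span K2 {x} : Set V2) ⊆ (W : Set V2) := by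
      exact SetLike.coe_subset_coe.mpr ((Submodule.span_singleton_le_iff_mem x W).mpr hxW)
    have hA : {y : V2 | y ∈ W ∧ y ∉ Submodule.span K2 {x}}
        = (W : Set V2) \ (Submodule.span K2 {x} : Set V2) := rfl
    rw [hA, Set.ncard_diff hAle, ncardW, ncardW, finrank_span_singleton hx0] at key
    omega
  · rintro y ⟨hyW, hyx⟩
    refine ⟨span_pair_finrank hx0 hyx, Submodule.subset_span (by simp), ?_⟩
    rw [Submodule.span_le]; rintro z (rfl | rfl) <;> simpa
  · rintro T ⟨hT2, hxT, hTW⟩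
    have hfib : {y ∈ {y : V2 | y ∈ W ∧ y ∉ Submodule.span K2 {x}} |
        Submodule.span K2 {x, y} = T} = (T : Set V2) \ (Submodule.span K2 {x} : Set V2) := by
      ext y
      simp only [Set.mem_setOf_eq, Set.mem_diff, SetLike.mem_coe]
      constructor
      · rintro ⟨⟨hyW, hyx⟩, rfl⟩
        exact ⟨Submodule.subset_span (by simp), hyx⟩
      · rintro ⟨hyT, hyx⟩
        refine ⟨⟨hTW hyT, hyx⟩, ?_⟩
        have hle : Submodule.span K2 {x, y} ≤ T := by
          rw [Submodule.span_le]; rintro z (rfl | rfl) <;> simpa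
        exact Submodule.eq_of_le_of_finrank_le hle (by rw [hT2, span_pair_finrank hx0 hyx])
    have hsub : (Submodule.span K2 {x} : Set V2) ⊆ (T : Set V2) :=
      SetLike.coe_subset_coe.mpr ((Submodule.span_singleton_le_iff_mem x T).mpr hxT)
    rw [hfib, Set.ncard_diff hsub, ncardW, ncardW, finrank_span_singleton hx0, hT2]
    norm_num

lemma planes_through_card (W : Submodule K2 V2) {x : V2} (hxW : x ∈ W) (hx0 : x ≠ 0)
    (hr : 1 ≤ finrank K2 W) :
    {T : Submodule K2 V2 | finrank K2 T = 2 ∧ x ∈ T ∧ T ≤ W}.ncard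
      = 2 ^ (finrank K2 W - 1) - 1 := by
  have h := planes_through W hxW hx0
  have h2 : 2 ^ finrank K2 W = 2 * 2 ^ (finrank K2 W - 1) := by
    conv_lhs => rw [show finrank K2 W = (finrank K2 W - 1) + 1 by omega]
    ring
  omega

lemma nonzero_card (W : Submodule K2 V2) :
    {y : V2 | y ∈ W ∧ y ≠ 0}.ncard = 2 ^ finrank K2 W - 1 := by
  have h : {y : V2 | y ∈ W ∧ y ≠ 0} = (W : Set V2) \ {0} := by
    ext y; simp [and_comm]
  rw [h, Set.ncard_diff_singleton_of_mem (by simp : (0:V2) ∈ (W : Set V2)), ncardW]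

lemma planes_total (W : Submodule K2 V2) (hr : 1 ≤ finrank K2 W) :
    3 * {T : Submodule K2 V2 | finrank K2 T = 2 ∧ T ≤ W}.ncard
      = (2 ^ (finrank K2 W - 1) - 1) * (2 ^ finrank K2 W - 1) := by
  classical
  set P : Set (V2 × Submodule K2 V2) :=
    {p | (p.1 ∈ p.2 ∧ p.1 ≠ 0) ∧ finrank K2 p.2 = 2 ∧ p.2 ≤ W} with hP
  have count1 : P.ncard = 3 * {T : Submodule K2 V2 | finrank K2 T = 2 ∧ T ≤ W}.ncard := by
    refine count_fiber P _ Prod.snd 3 (fun p hp => hp.2) (Set.toFinite _) ?_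
    rintro T ⟨hT2, hTW⟩
    have h : {p ∈ P | p.2 = T} = (fun v => (v, T)) '' {y : V2 | y ∈ T ∧ y ≠ 0} := by
      ext ⟨a, b⟩
      simp only [hP, Set.mem_setOf_eq, Set.mem_image, Prod.mk.injEq]
      constructor
      · rintro ⟨⟨⟨h1, h2⟩, _⟩, rfl⟩; exact ⟨a, ⟨h1, h2⟩, rfl, rfl⟩
      · rintro ⟨y, ⟨h1, h2⟩, rfl, rfl⟩; exact ⟨⟨⟨h1, h2⟩, hT2, hTW⟩, rfl⟩
    rw [h, Set.ncard_image_of_injective _ (fun a b hab => (Prod.mk.injEq _ _ _ _ ▸ hab).1),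
      nonzero_card, hT2]
    norm_num
  have count2 : P.ncard = (2 ^ (finrank K2 W - 1) - 1) * {y : V2 | y ∈ W ∧ y ≠ 0}.ncard := by
    refine count_fiber P _ Prod.fst (2 ^ (finrank K2 W - 1) - 1)
      (fun p hp => ⟨hp.2.2 hp.1.1, hp.1.2⟩) (Set.toFinite _) ?_
    rintro x ⟨hxW, hx0⟩
    have h : {p ∈ P | p.1 = x} = (fun T => (x, T)) ''
        {T : Submodule K2 V2 | finrank K2 T = 2 ∧ x ∈ T ∧ T ≤ W} := by
      ext ⟨a, b⟩
      simp only [hP, Set.mem_setOf_eq, Set.mem_image, Prod.mk.injEq]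
      constructor
      · rintro ⟨⟨⟨h1, h2⟩, h3, h4⟩, rfl⟩; exact ⟨b, ⟨h3, h1, h4⟩, rfl, rfl⟩
      · rintro ⟨T, ⟨h1, h2, h3⟩, rfl, rfl⟩; exact ⟨⟨⟨h2, hx0⟩, h1, h3⟩, rfl⟩
    rw [h, Set.ncard_image_of_injective _ (fun a b hab => (Prod.mk.injEq _ _ _ _ ▸ hab).2),
      planes_through_card W hxW hx0 hr]
  rw [← count1, count2, nonzero_card]

lemma exists_plane_le (W : Submodule K2 V2) (h2 : 2 ≤ finrank K2 W) :
    ∃ T : Submodule K2 V2, finrank K2 T = 2 ∧ T ≤ W := by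
  have hx : ¬ W ≤ ⊥ := fun h => by
    have := Submodule.finrank_mono h
    simp only [finrank_bot] at this; omega
  obtain ⟨x, hxW, hx0⟩ := SetLike.not_le_iff_exists.mp hx
  rw [Submodule.mem_bot] at hx0
  have hy : ¬ W ≤ Submodule.span K2 {x} := fun h => by
    have := Submodule.finrank_mono h
    rw [finrank_span_singleton hx0] at this; omega
  obtain ⟨y, hyW, hyx⟩ := SetLike.not_le_iff_exists.mp hy
  refine ⟨Submodule.span K2 {x, y}, span_pair_finrank hx0 hyx, ?_⟩
  rw [Submodule.span_le]; rintro z (rfl | rfl) <;> simpa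
/-- Intersection vector of a solid containing a codeword, with respect to a `2`-analogue of
the Fano plane: `(a_0, a_1, a_2, a_3) = (128, 224, 28, 1)`. -/
theorem fano_analogue_intersection_vector_with_codeword
    (C : Set (Submodule (ZMod 2) (Fin 7 → ZMod 2)))
    (h3 : ∀ U ∈ C, Module.finrank (ZMod 2) U = 3)
    (hSteiner : ∀ T : Submodule (ZMod 2) (Fin 7 → ZMod 2),
      Module.finrank (ZMod 2) T = 2 → ∃! U, U ∈ C ∧ T ≤ U)
    (S : Submodule (ZMod 2) (Fin 7 → ZMod 2)) (hS : Module.finrank (ZMod 2) S = 4)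
    (hyes : ∃ U ∈ C, U ≤ S) :
    {U ∈ C | Module.finrank (ZMod 2) ↥(U ⊓ S) = 0}.ncard = 128 ∧
    {U ∈ C | Module.finrank (ZMod 2) ↥(U ⊓ S) = 1}.ncard = 224 ∧
    {U ∈ C | Module.finrank (ZMod 2) ↥(U ⊓ S) = 2}.ncard = 28 ∧
    {U ∈ C | Module.finrank (ZMod 2) ↥(U ⊓ S) = 3}.ncard = 1 := by
  classical
  have hCfin : C.Finite := Set.toFinite C
  obtain ⟨U0, hU0C, hU0S⟩ := hyes
  have hfin7 : finrank K2 (⊤ : Submodule K2 V2) = 7 := by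
    simp [finrank_top, Module.finrank_pi]
  choose fC0 hfC01 hfC02 using fun (T : Submodule K2 V2) (h : finrank K2 T = 2) => hSteiner T h
  set fC : Submodule K2 V2 → Submodule K2 V2 :=
    fun T => if h : finrank K2 T = 2 then fC0 T h else ⊥ with hfCdef
  have hfCmem : ∀ T : Submodule K2 V2, finrank K2 T = 2 → fC T ∈ C ∧ T ≤ fC T := by
    intro T h
    rw [hfCdef]; simp only [dif_pos h]; exact hfC01 T h
  have hfCuniq : ∀ T : Submodule K2 V2, finrank K2 T = 2 →
      ∀ U, U ∈ C → T ≤ U → fC T = U := by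
    intro T h U hU hTU
    rw [hfCdef]; simp only [dif_pos h]; exact (hfC02 T h U ⟨hU, hTU⟩).symm
  have uniq2 : ∀ T : Submodule K2 V2, finrank K2 T = 2 →
      ∀ U, U ∈ C → T ≤ U → ∀ U', U' ∈ C → T ≤ U' → U = U' := by
    intro T hT U hU hTU U' hU' hTU'
    rw [← hfCuniq T hT U hU hTU, hfCuniq T hT U' hU' hTU']
  have unique_in_S : ∀ U ∈ C, U ≤ S → U = U0 := by
    intro U hU hUS
    have hsup : finrank K2 ((U ⊔ U0 : Submodule K2 V2)) ≤ 4 := by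
      rw [← hS]; exact Submodule.finrank_mono (sup_le hUS hU0S)
    have heq := Submodule.finrank_sup_add_finrank_inf_eq U U0
    rw [h3 U hU, h3 U0 hU0C] at heq
    obtain ⟨T, hT2, hTle⟩ := exists_plane_le (U ⊓ U0) (by omega)
    exact uniq2 T hT2 U hU (hTle.trans inf_le_left) U0 hU0C (hTle.trans inf_le_right)
  -- a3 = 1
  have hA3 : {U ∈ C | finrank K2 ↥(U ⊓ S) = 3} = {U0} := by
    ext U
    simp only [Set.mem_setOf_eq, Set.mem_singleton_iff]
    constructor
    · rintro ⟨hUC, h33⟩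
      have hle : U ⊓ S = U :=
        Submodule.eq_of_le_of_finrank_le inf_le_left (by rw [h33, h3 U hUC])
      exact unique_in_S U hUC (inf_eq_left.mp hle)
    · rintro rfl
      refine ⟨hU0C, ?_⟩
      rw [inf_eq_left.mpr hU0S, h3 _ hU0C]
  have a3 : {U ∈ C | finrank K2 ↥(U ⊓ S) = 3}.ncard = 1 := by
    rw [hA3, Set.ncard_singleton]
  -- plane counts
  have hNS : {T : Submodule K2 V2 | finrank K2 T = 2 ∧ T ≤ S}.ncard = 35 := by
    have := planes_total S (by rw [hS]; omega)
    rw [hS, show ((2:ℕ) ^ (4 - 1) - 1) * (2 ^ 4 - 1) = 105 from by norm_num] at this; omega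
  have hNU0 : {T : Submodule K2 V2 | finrank K2 T = 2 ∧ T ≤ U0}.ncard = 7 := by
    have := planes_total U0 (by rw [h3 U0 hU0C]; omega)
    rw [h3 U0 hU0C, show ((2:ℕ) ^ (3 - 1) - 1) * (2 ^ 3 - 1) = 21 from by norm_num] at this
    omega
  have hNtop : {T : Submodule K2 V2 | finrank K2 T = 2 ∧ T ≤ ⊤}.ncard = 2667 := by
    have := planes_total ⊤ (by rw [hfin7]; omega)
    rw [hfin7, show ((2:ℕ) ^ (7 - 1) - 1) * (2 ^ 7 - 1) = 8001 from by norm_num] at this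
    omega
  -- a2 = 28
  have a2 : {U ∈ C | finrank K2 ↥(U ⊓ S) = 2}.ncard = 28 := by
    have himg : (fun U => U ⊓ S) '' {U ∈ C | finrank K2 ↥(U ⊓ S) = 2}
        = {T : Submodule K2 V2 | finrank K2 T = 2 ∧ T ≤ S}
          \ {T : Submodule K2 V2 | finrank K2 T = 2 ∧ T ≤ U0} := by
      ext T
      simp only [Set.mem_image, Set.mem_setOf_eq, Set.mem_diff]
      constructor
      · rintro ⟨U, ⟨hUC, hU2⟩, rfl⟩
        refine ⟨⟨hU2, inf_le_right⟩, ?_⟩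
        rintro ⟨-, hTU0⟩
        have hUeq : U = U0 := uniq2 _ hU2 U hUC inf_le_left U0 hU0C hTU0
        rw [hUeq, inf_eq_left.mpr hU0S, h3 U0 hU0C] at hU2
        exact absurd hU2 (by decide)
      · rintro ⟨⟨hT2, hTS⟩, hnot⟩
        have hm := hfCmem T hT2
        have hTUS : T ≤ fC T ⊓ S := le_inf hm.2 hTS
        have h2le : 2 ≤ finrank K2 ↥(fC T ⊓ S) := by
          have := Submodule.finrank_mono hTUS; omega
        have h3ge : finrank K2 ↥(fC T ⊓ S) ≤ 3 := by
          rw [← h3 _ hm.1]; exact Submodule.finrank_mono inf_le_left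
        have hne : finrank K2 ↥(fC T ⊓ S) ≠ 3 := by
          intro h33
          have heqU : fC T ⊓ S = fC T :=
            Submodule.eq_of_le_of_finrank_le inf_le_left (by rw [h33, h3 _ hm.1])
          have hle : fC T ≤ S := inf_eq_left.mp heqU
          have := unique_in_S _ hm.1 hle
          exact hnot ⟨hT2, this ▸ hm.2⟩
        refine ⟨fC T, ⟨hm.1, by omega⟩, ?_⟩
        exact (Submodule.eq_of_le_of_finrank_le hTUS (by omega)).symm
    have hinj : Set.InjOn (fun U => U ⊓ S) {U ∈ C | finrank K2 ↥(U ⊓ S) = 2} := by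
      rintro U ⟨hUC, hU2⟩ U' ⟨hU'C, hU'2⟩ heq
      simp only at heq
      exact uniq2 (U ⊓ S) hU2 U hUC inf_le_left U' hU'C (le_trans (le_of_eq heq) inf_le_left)
    have hsub : {T : Submodule K2 V2 | finrank K2 T = 2 ∧ T ≤ U0}
        ⊆ {T : Submodule K2 V2 | finrank K2 T = 2 ∧ T ≤ S} :=
      fun T hT => ⟨hT.1, hT.2.trans hU0S⟩
    rw [← Set.ncard_image_of_injOn hinj, himg, Set.ncard_diff hsub, hNS, hNU0]
  -- |C| = 381
  have hCcard : C.ncard = 381 := by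
    have key := count_fiber {T : Submodule K2 V2 | finrank K2 T = 2 ∧ T ≤ ⊤} C fC 7
      (fun T hT => (hfCmem T hT.1).1) hCfin ?_
    · rw [hNtop] at key; omega
    · intro U hU
      have h : {T ∈ {T : Submodule K2 V2 | finrank K2 T = 2 ∧ T ≤ ⊤} | fC T = U}
          = {T : Submodule K2 V2 | finrank K2 T = 2 ∧ T ≤ U} := by
        ext T
        simp only [Set.mem_setOf_eq]
        constructor
        · rintro ⟨⟨hT2, -⟩, rfl⟩; exact ⟨hT2, (hfCmem T hT2).2⟩
        · rintro ⟨hT2, hTU⟩; exact ⟨⟨hT2, le_top⟩, hfCuniq T hT2 U hU hTU⟩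
      rw [h]
      have := planes_total U (by rw [h3 U hU]; omega)
      rw [h3 U hU, show ((2:ℕ) ^ (3 - 1) - 1) * (2 ^ 3 - 1) = 21 from by norm_num] at this
      omega
  -- each nonzero point is in 21 codewords
  have hthrough : ∀ x : V2, x ≠ 0 → {U ∈ C | x ∈ U}.ncard = 21 := by
    intro x hx0
    have key := count_fiber {T : Submodule K2 V2 | finrank K2 T = 2 ∧ x ∈ T ∧ T ≤ ⊤}
      {U ∈ C | x ∈ U} fC 3
      (fun T hT => ⟨(hfCmem T hT.1).1, (hfCmem T hT.1).2 hT.2.1⟩) (Set.toFinite _) ?_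
    · rw [planes_through_card ⊤ trivial hx0 (by rw [hfin7]; omega), hfin7,
        show ((2:ℕ) ^ (7 - 1) - 1) = 63 from by norm_num] at key
      omega
    · rintro U ⟨hUC, hxU⟩
      have h : {T ∈ {T : Submodule K2 V2 | finrank K2 T = 2 ∧ x ∈ T ∧ T ≤ ⊤} | fC T = U}
          = {T : Submodule K2 V2 | finrank K2 T = 2 ∧ x ∈ T ∧ T ≤ U} := by
        ext T
        simp only [Set.mem_setOf_eq]
        constructor
        · rintro ⟨⟨hT2, hxT, -⟩, rfl⟩; exact ⟨hT2, hxT, (hfCmem T hT2).2⟩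
        · rintro ⟨hT2, hxT, hTU⟩; exact ⟨⟨hT2, hxT, le_top⟩, hfCuniq T hT2 U hUC hTU⟩
      rw [h, planes_through_card U hxU hx0 (by rw [h3 U hUC]; omega), h3 U hUC]
      norm_num
  -- incidence double count
  set I : Set (V2 × Submodule K2 V2) := {p | (p.1 ∈ S ∧ p.1 ≠ 0) ∧ p.2 ∈ C ∧ p.1 ∈ p.2}
    with hI
  have hI1 : I.ncard = 315 := by
    have key := count_fiber I {x : V2 | x ∈ S ∧ x ≠ 0} Prod.fst 21
      (fun p hp => hp.1) (Set.toFinite _) ?_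
    · rw [nonzero_card S, hS, show ((2:ℕ) ^ 4 - 1) = 15 from by norm_num] at key; omega
    · rintro x ⟨hxS, hx0⟩
      have h : {p ∈ I | p.1 = x} = (fun U => (x, U)) '' {U ∈ C | x ∈ U} := by
        ext ⟨a, b⟩
        simp only [hI, Set.mem_setOf_eq, Set.mem_image, Prod.mk.injEq]
        constructor
        · rintro ⟨⟨⟨h1, h2⟩, h4, h5⟩, rfl⟩; exact ⟨b, ⟨h4, h5⟩, rfl, rfl⟩
        · rintro ⟨U, ⟨h4, h5⟩, rfl, rfl⟩; exact ⟨⟨⟨hxS, hx0⟩, h4, h5⟩, rfl⟩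
      rw [h, Set.ncard_image_of_injective _ (fun a b hab => (Prod.mk.injEq _ _ _ _ ▸ hab).2),
        hthrough x hx0]
  have hI2 : I.ncard = ∑ U ∈ hCfin.toFinset, (2 ^ finrank K2 ↥(U ⊓ S) - 1) := by
    refine count_sum I hCfin.toFinset Prod.snd _
      (fun p hp => hCfin.mem_toFinset.mpr hp.2.1) ?_
    intro U hUF
    have hUC := hCfin.mem_toFinset.mp hUF
    have h : {p ∈ I | p.2 = U} = (fun x => (x, U)) '' {x : V2 | x ∈ U ⊓ S ∧ x ≠ 0} := by
      ext ⟨a, b⟩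
      simp only [hI, Set.mem_setOf_eq, Set.mem_image, Prod.mk.injEq, Submodule.mem_inf]
      constructor
      · rintro ⟨⟨⟨h1, h2⟩, h4, h5⟩, rfl⟩; exact ⟨a, ⟨⟨h5, h1⟩, h2⟩, rfl, rfl⟩
      · rintro ⟨x, ⟨⟨h5, h1⟩, h2⟩, rfl, rfl⟩; exact ⟨⟨⟨h1, h2⟩, hUC, h5⟩, rfl⟩
    rw [h, Set.ncard_image_of_injective _ (fun a b hab => (Prod.mk.injEq _ _ _ _ ▸ hab).1),
      nonzero_card (U ⊓ S)]
  -- partition of C by intersection dimension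
  set d : Submodule K2 V2 → ℕ := fun U => finrank K2 ↥(U ⊓ S) with hd
  have hd3 : ∀ U ∈ hCfin.toFinset, d U ∈ Finset.range 4 := by
    intro U hU
    have := Submodule.finrank_mono (inf_le_left : U ⊓ S ≤ U)
    rw [h3 U (hCfin.mem_toFinset.mp hU)] at this
    rw [Finset.mem_range]
    simp only [hd]
    omega
  have hsum := Finset.sum_fiberwise_of_maps_to hd3 (fun U => 2 ^ d U - 1)
  have hcardsum := Finset.card_eq_sum_card_fiberwise hd3
  have ha : ∀ i : ℕ, (hCfin.toFinset.filter (fun U => d U = i)).card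
      = {U ∈ C | finrank K2 ↥(U ⊓ S) = i}.ncard := by
    intro i
    rw [← Set.ncard_coe_finset]
    congr 1
    ext U
    simp [hd]
  have hinner : ∀ i, ∑ U ∈ hCfin.toFinset.filter (fun U => d U = i), (2 ^ d U - 1)
      = (2 ^ i - 1) * (hCfin.toFinset.filter (fun U => d U = i)).card := by
    intro i
    rw [Finset.sum_congr rfl (fun U hU => by rw [(Finset.mem_filter.mp hU).2]),
      Finset.sum_const, smul_eq_mul, mul_comm]
  rw [Finset.sum_range_succ, Finset.sum_range_succ, Finset.sum_range_succ,
    Finset.sum_range_succ, Finset.sum_range_zero] at hsum hcardsum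
  rw [hinner 0, hinner 1, hinner 2, hinner 3, ha 0, ha 1, ha 2, ha 3] at hsum
  rw [ha 0, ha 1, ha 2, ha 3] at hcardsum
  rw [← hsum] at hI2
  rw [hI1] at hI2
  rw [Set.ncard_eq_toFinset_card C hCfin, hcardsum] at hCcard
  rw [show ((2:ℕ) ^ 0 - 1) = 0 from rfl, show ((2:ℕ) ^ 1 - 1) = 1 from rfl,
    show ((2:ℕ) ^ 2 - 1) = 3 from rfl, show ((2:ℕ) ^ 3 - 1) = 7 from rfl] at hI2
  exact ⟨by omega, by omega, a2, a3⟩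
end

section
/- Let A ⊆ F_q^{m×n} be a set of matrices such that any two distinct elements A, B satisfy rank(A−B) ≥ n−k+1, where k ≤ m ≤ n. Then |A| ≤ q^{nk} (the Singleton-type bound for rank-metric codes). -/
lemma rank_le_of_zero_rows {F : Type*} [Field F] {m n k : ℕ} (hkm : k ≤ m)
    (M : Matrix (Fin m) (Fin n) F) (h : ∀ i : Fin m, (i : ℕ) < k → ∀ j, M i j = 0) :
    M.rank ≤ m - k := by
  classical
  set e : Fin (m - k) → Fin m := fun l => ⟨k + l, by omega⟩ with he
  have hei : Function.Injective e := by
    intro a b hab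
    simpa [he, Fin.ext_iff] using hab
  set N : Matrix (Fin (m - k)) (Fin n) F := M.submatrix e id with hN
  set P : Matrix (Fin m) (Fin (m - k)) F :=
    (1 : Matrix (Fin m) (Fin m) F).submatrix id e with hP
  have hM : M = P * N := by
    ext i j
    rw [Matrix.mul_apply]
    by_cases hik : (i : ℕ) < k
    · rw [h i hik j]
      apply (Finset.sum_eq_zero _).symm
      intro l _
      have : i ≠ e l := by
        intro hc
        rw [hc] at hik
        simp only [he] at hik
        omega
      simp [hP, hN, Matrix.one_apply, this]
    · have hl : i = e ⟨(i : ℕ) - k, by omega⟩ := by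
        simp [he, Fin.ext_iff]; omega
      rw [Finset.sum_eq_single (⟨(i : ℕ) - k, by omega⟩ : Fin (m - k))]
      · simp [hP, hN, Matrix.one_apply, ← hl]
      · intro b _ hb
        have : i ≠ e b := by
          intro hc
          exact hb (hei (hl ▸ hc)).symm
        simp [hP, hN, Matrix.one_apply, this]
      · simp
  calc M.rank = (P * N).rank := by rw [hM]
    _ ≤ N.rank := Matrix.rank_mul_le_right P N
    _ ≤ Fintype.card (Fin (m - k)) := Matrix.rank_le_card_height N
    _ = m - k := by simp

/-- Singleton-type bound for rank-metric codes: a set of `m × n` matrices over `F_q`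
(`k ≤ m ≤ n`) with minimum rank distance at least `n - k + 1` has at most `q^{nk}` elements. -/
theorem rank_metric_singleton_bound (F : Type*) [Field F] [Fintype F] (m n k : ℕ)
    (hkm : k ≤ m) (hmn : m ≤ n) (A : Set (Matrix (Fin m) (Fin n) F))
    (hd : ∀ X ∈ A, ∀ Y ∈ A, X ≠ Y → n - k + 1 ≤ (X - Y).rank) :
    A.ncard ≤ (Fintype.card F) ^ (n * k) := by
  classical
  set f : Matrix (Fin m) (Fin n) F → Matrix (Fin k) (Fin n) F :=
    fun M => M.submatrix (Fin.castLE hkm) id with hf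
  have hinj : Set.InjOn f A := by
    intro X hX Y hY hXY
    by_contra hne
    have hrank := hd X hX Y hY hne
    have hzero : ∀ i : Fin m, (i : ℕ) < k → ∀ j, (X - Y) i j = 0 := by
      intro i hik j
      have := congrFun (congrFun hXY ⟨i, hik⟩) j
      simp only [hf, Matrix.submatrix_apply, id] at this
      have hc : Fin.castLE hkm ⟨(i : ℕ), hik⟩ = i := by
        simp [Fin.ext_iff]
      rw [hc] at this
      simp [Matrix.sub_apply, this]
    have hle := rank_le_of_zero_rows hkm (X - Y) hzero
    omega
  have hcard : A.ncard = (f '' A).ncard := (Set.ncard_image_of_injOn hinj).symm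
  rw [hcard]
  calc (f '' A).ncard ≤ (Set.univ : Set (Matrix (Fin k) (Fin n) F)).ncard :=
        Set.ncard_le_ncard (Set.subset_univ _) Set.finite_univ
    _ = Fintype.card (Matrix (Fin k) (Fin n) F) := by
        rw [Set.ncard_univ, Nat.card_eq_fintype_card]
    _ = (Fintype.card F) ^ (n * k) := by
        simp [Matrix, Fintype.card_fun]
        exact Fintype.card_eq_nat_card.trans (by
          rw [Nat.card_fun, Nat.card_fun]
          simp only [Nat.card_eq_fintype_card, Fintype.card_fin]
          ring)
end

section
/- The lifting map λ sending a matrix A ∈ F_q^{m×n} to the row space of the block matrix (I_m | A) ∈ F_q^{m×(m+n)} satisfies d_S(λ(A), λ(B)) = 2·rank(A − B) for all A, B; in particular λ is injective and each λ(A) is m-dimensional. -/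
/-- The lifting map: `A ∈ F^{m×n}` is sent to the row space of `(I_m | A) ⊆ F^{m+n}`. -/
noncomputable def liftMatrix {F : Type*} [Field F] {m n : ℕ} (A : Matrix (Fin m) (Fin n) F) :
    Submodule F (Fin m ⊕ Fin n → F) :=
  LinearMap.range (Matrix.vecMulLinear (Matrix.fromCols (1 : Matrix (Fin m) (Fin m) F) A))

open scoped Matrix

lemma liftMatrix_apply {F : Type*} [Field F] {m n : ℕ} (A : Matrix (Fin m) (Fin n) F)
    (x : Fin m → F) :
    Matrix.vecMulLinear (Matrix.fromCols (1 : Matrix (Fin m) (Fin m) F) A) x =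
      Sum.elim x (x ᵥ* A) := by
  simp [Matrix.vecMulLinear_apply, Matrix.vecMul_fromCols, Matrix.vecMul_one]

lemma mem_liftMatrix {F : Type*} [Field F] {m n : ℕ} (A : Matrix (Fin m) (Fin n) F)
    (v : Fin m ⊕ Fin n → F) :
    v ∈ liftMatrix A ↔ ∃ x : Fin m → F, Sum.elim x (x ᵥ* A) = v := by
  simp only [liftMatrix, LinearMap.mem_range, liftMatrix_apply]

lemma finrank_range_vecMulLinear {F : Type*} [Field F] {m n : ℕ}
    (M : Matrix (Fin m) (Fin n) F) :
    Module.finrank F ↥(LinearMap.range M.vecMulLinear) = M.rank := by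
  rw [show M.vecMulLinear = Mᵀ.mulVecLin by
    rw [← Matrix.vecMulLinear_transpose, Matrix.transpose_transpose]]
  rw [show Module.finrank F ↥(LinearMap.range Mᵀ.mulVecLin) = Mᵀ.rank from rfl,
    Matrix.rank_transpose]

lemma finrank_liftMatrix {F : Type*} [Field F] {m n : ℕ} (A : Matrix (Fin m) (Fin n) F) :
    Module.finrank F ↥(liftMatrix A) = m := by
  have hinj : Function.Injective
      (Matrix.vecMulLinear (Matrix.fromCols (1 : Matrix (Fin m) (Fin m) F) A)) := by
    intro x y hxy
    rw [liftMatrix_apply, liftMatrix_apply] at hxy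
    funext i
    exact congrFun hxy (Sum.inl i)
  rw [liftMatrix, LinearMap.finrank_range_of_inj hinj]
  simp

lemma finrank_inf_liftMatrix {F : Type*} [Field F] {m n : ℕ}
    (A B : Matrix (Fin m) (Fin n) F) :
    Module.finrank F ↥(liftMatrix A ⊓ liftMatrix B) =
      Module.finrank F ↥(LinearMap.ker (A - B).vecMulLinear) := by
  symm
  refine LinearEquiv.finrank_eq (LinearEquiv.ofBijective
    (LinearMap.codRestrict (liftMatrix A ⊓ liftMatrix B)
      ((Matrix.vecMulLinear (Matrix.fromCols (1 : Matrix (Fin m) (Fin m) F) A)).comp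
        (Submodule.subtype _)) ?_) ⟨?_, ?_⟩)
  · rintro ⟨x, hx⟩
    simp only [LinearMap.mem_ker, Matrix.vecMulLinear_apply, Matrix.vecMul_sub,
      sub_eq_zero] at hx
    constructor
    · exact ⟨x, rfl⟩
    · refine ⟨x, ?_⟩
      simp only [LinearMap.comp_apply, Submodule.coe_subtype, liftMatrix_apply]
      rw [hx]
  · intro x y hxy
    have := congrArg Subtype.val hxy
    simp only [LinearMap.codRestrict_apply, LinearMap.comp_apply, Submodule.coe_subtype,
      liftMatrix_apply] at this
    ext i
    exact congrFun this (Sum.inl i)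
  · rintro ⟨v, hvA, hvB⟩
    obtain ⟨x, hx⟩ := (mem_liftMatrix A v).mp hvA
    obtain ⟨y, hy⟩ := (mem_liftMatrix B v).mp hvB
    have hxy : x = y := by
      funext i
      have := congrFun (hx.trans hy.symm) (Sum.inl i)
      simpa using this
    have hker : x ∈ LinearMap.ker (A - B).vecMulLinear := by
      simp only [LinearMap.mem_ker, Matrix.vecMulLinear_apply, Matrix.vecMul_sub,
        sub_eq_zero]
      subst hxy
      funext j
      have h1 := congrFun hx (Sum.inr j)
      have h2 := congrFun hy (Sum.inr j)
      simp only [Sum.elim_inr] at h1 h2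
      rw [h1, h2]
    refine ⟨⟨x, hker⟩, ?_⟩
    apply Subtype.ext
    simp only [LinearMap.codRestrict_apply, LinearMap.comp_apply, Submodule.coe_subtype,
      liftMatrix_apply]
    exact hx

lemma finrank_ker_vecMulLinear {F : Type*} [Field F] {m n : ℕ}
    (M : Matrix (Fin m) (Fin n) F) :
    Module.finrank F ↥(LinearMap.ker M.vecMulLinear) = m - M.rank := by
  have h := LinearMap.finrank_range_add_finrank_ker M.vecMulLinear
  rw [finrank_range_vecMulLinear] at h
  simp only [Module.finrank_pi, Fintype.card_fin] at h
  omega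

/-- The lifting map `λ` satisfies `d_S(λ(A), λ(B)) = 2·rank(A-B)`; in particular it is
injective and each `λ(A)` is `m`-dimensional. -/
theorem lift_is_scaled_isometry (F : Type*) [Field F] [Fintype F] (m n : ℕ) :
    (∀ A B : Matrix (Fin m) (Fin n) F,
        Module.finrank F ↥(liftMatrix A ⊔ liftMatrix B) -
            Module.finrank F ↥(liftMatrix A ⊓ liftMatrix B) = 2 * (A - B).rank) ∧
      Function.Injective (liftMatrix (F := F) (m := m) (n := n)) ∧
      ∀ A : Matrix (Fin m) (Fin n) F, Module.finrank F ↥(liftMatrix A) = m := by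
  have key : ∀ A B : Matrix (Fin m) (Fin n) F,
      Module.finrank F ↥(liftMatrix A ⊔ liftMatrix B) -
          Module.finrank F ↥(liftMatrix A ⊓ liftMatrix B) = 2 * (A - B).rank := by
    intro A B
    have hsum := Submodule.finrank_sup_add_finrank_inf_eq (liftMatrix A) (liftMatrix B)
    rw [finrank_liftMatrix, finrank_liftMatrix] at hsum
    have hinf := (finrank_inf_liftMatrix A B).trans (finrank_ker_vecMulLinear (A - B))
    have hrle : (A - B).rank ≤ m := by
      simpa using Matrix.rank_le_card_height (A - B)
    omega
  refine ⟨key, ?_, finrank_liftMatrix⟩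
  intro A B hAB
  have h := key A B
  rw [hAB, sup_idem, inf_idem, Nat.sub_self] at h
  have hr : (A - B).rank = 0 := by omega
  have hbot : LinearMap.range (A - B).mulVecLin = ⊥ := by
    rw [← Submodule.finrank_eq_zero]
    exact hr
  have hf : (A - B).mulVecLin = 0 := LinearMap.range_eq_bot.mp hbot
  have : A - B = 0 := by
    ext i j
    have h0 := congrFun (congrArg (fun g => g (Pi.single j 1)) hf) i
    simpa [Matrix.mulVecLin_apply, Matrix.mulVec_single] using h0
  exact sub_eq_zero.mp this
end

section
/- Let W be a 3-dimensional F_2-subspace of F_16 and for a_0, a_1 ∈ F_16 define G(a_0,a_1) = {(x, a_0 x + a_1 x^2) : x ∈ W} ⊆ W × F_16. Then the 256 subspaces G(a_0,a_1) form a (7, 256, 4; 3) subspace code: each is a 3-dimensional F_2-subspace of the 7-dimensional space W × F_16, and any two distinct ones intersect in dimension at most 1. -/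
/-- The field `F_16`, a `4`-dimensional vector space over `F_2`. -/
abbrev F16 := GaloisField 2 4

/-- The `F_2`-linear endomorphism of `F_16` induced by `a_0 x + a_1 x^2`. -/
noncomputable def lmap (a0 a1 : F16) : F16 →ₗ[ZMod 2] F16 where
  toFun x := a0 * x + a1 * x ^ 2
  map_add' x y := by
    have h : (x + y) ^ 2 = x ^ 2 + y ^ 2 := CharTwo.add_sq x y
    show a0 * (x + y) + a1 * (x + y) ^ 2 = (a0 * x + a1 * x ^ 2) + (a0 * y + a1 * y ^ 2)
    rw [h]; ring
  map_smul' c x := by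
    have hc : c = 0 ∨ c = 1 := by
      fin_cases c
      · exact Or.inl rfl
      · exact Or.inr rfl
    rcases hc with rfl | rfl <;> simp

/-- The codeword `G(a_0, a_1) = {(x, a_0 x + a_1 x^2) : x ∈ W}`, as a subspace of
`W × F_16`. -/
noncomputable def Gc (W : Submodule (ZMod 2) F16) (a0 a1 : F16) :
    Submodule (ZMod 2) (↥W × F16) :=
  LinearMap.graph ((lmap a0 a1).comp W.subtype)

noncomputable instance : Fintype F16 := Fintype.ofFinite _

lemma card_roots_le (c0 c1 : F16) (h : ¬(c0 = 0 ∧ c1 = 0)) :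
    Nat.card {x : F16 | c0 * x + c1 * x ^ 2 = 0} ≤ 2 := by
  classical
  set p : Polynomial F16 := Polynomial.C c0 * Polynomial.X + Polynomial.C c1 * Polynomial.X ^ 2
    with hp
  have hpne : p ≠ 0 := by
    intro h0
    apply h
    constructor
    · have := congrArg (fun q => Polynomial.coeff q 1) h0
      simpa [hp, Polynomial.coeff_add, Polynomial.coeff_C_mul] using this
    · have := congrArg (fun q => Polynomial.coeff q 2) h0
      simpa [hp, Polynomial.coeff_add, Polynomial.coeff_C_mul] using this
  have hdeg : p.natDegree ≤ 2 := by
    refine (Polynomial.natDegree_add_le _ _).trans (max_le ?_ ?_)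
    · exact (Polynomial.natDegree_C_mul_le _ _).trans (by simp)
    · exact (Polynomial.natDegree_C_mul_le _ _).trans (by simp)
  have hsub : {x : F16 | c0 * x + c1 * x ^ 2 = 0} ⊆ ↑p.roots.toFinset := by
    intro x hx
    simp only [Multiset.mem_toFinset, Finset.coe_sort_coe, Finset.mem_coe]
    rw [Polynomial.mem_roots hpne]
    simpa [hp, Polynomial.IsRoot] using hx
  calc Nat.card {x : F16 | c0 * x + c1 * x ^ 2 = 0}
      = ({x : F16 | c0 * x + c1 * x ^ 2 = 0} : Set F16).ncard := Nat.card_coe_set_eq _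
    _ ≤ (↑p.roots.toFinset : Set F16).ncard := Set.ncard_le_ncard hsub (Set.toFinite _)
    _ = p.roots.toFinset.card := by simp [Set.ncard_coe_finset]
    _ ≤ p.natDegree := (Multiset.toFinset_card_le p.roots).trans p.card_roots'
    _ ≤ 2 := hdeg

/-- The `256` subspaces `G(a_0,a_1)` form a `(7, 256, 4; 3)` subspace code in the
`7`-dimensional space `W × F_16`. -/
theorem lifted_gabidulin_code (W : Submodule (ZMod 2) F16)
    (hW : Module.finrank (ZMod 2) W = 3) :
    Module.finrank (ZMod 2) (↥W × F16) = 7 ∧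
      (∀ a0 a1 : F16, Module.finrank (ZMod 2) ↥(Gc W a0 a1) = 3) ∧
      Function.Injective (fun p : F16 × F16 => Gc W p.1 p.2) ∧
      (Set.range fun p : F16 × F16 => Gc W p.1 p.2).ncard = 256 ∧
      ∀ a0 a1 b0 b1 : F16, (a0, a1) ≠ (b0, b1) →
        Module.finrank (ZMod 2) ↥(Gc W a0 a1 ⊓ Gc W b0 b1) ≤ 1 := by
  have hF16 : Nat.card F16 = 16 := by
    have h := GaloisField.card 2 4 (by norm_num)
    simpa using h
  have hrank : ∀ a0 a1 : F16, Module.finrank (ZMod 2) ↥(Gc W a0 a1) = 3 := by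
    intro a0 a1
    have hinj : Function.Injective
        (LinearMap.id.prod ((lmap a0 a1).comp W.subtype)) := fun x y h =>
      congrArg Prod.fst h
    rw [Gc, LinearMap.graph_eq_range_prod, LinearMap.finrank_range_of_inj hinj, hW]
  -- key: membership in intersection forces root of difference polynomial
  have hroot : ∀ a0 a1 b0 b1 : F16, ∀ v : ↥W × F16,
      v ∈ Gc W a0 a1 → v ∈ Gc W b0 b1 →
      (a0 - b0) * (v.1 : F16) + (a1 - b1) * (v.1 : F16) ^ 2 = 0 := by
    intro a0 a1 b0 b1 v h1 h2
    rw [Gc, LinearMap.mem_graph_iff] at h1 h2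
    have : a0 * (v.1 : F16) + a1 * (v.1 : F16) ^ 2
        = b0 * (v.1 : F16) + b1 * (v.1 : F16) ^ 2 := by
      have := h1.symm.trans h2
      simpa [lmap, LinearMap.comp_apply] using this
    linear_combination this
  have hWne : ∀ a0 a1 b0 b1 : F16, Gc W a0 a1 = Gc W b0 b1 → (a0, a1) = (b0, b1) := by
    intro a0 a1 b0 b1 heq
    by_contra hne
    have hc : ¬(a0 - b0 = 0 ∧ a1 - b1 = 0) := by
      intro ⟨h1, h2⟩
      exact hne (by rw [Prod.mk.injEq]; exact ⟨sub_eq_zero.mp h1, sub_eq_zero.mp h2⟩)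
    have hsub : (W : Set F16) ⊆ {x : F16 | (a0 - b0) * x + (a1 - b1) * x ^ 2 = 0} := by
      intro x hx
      have hmem : ((⟨x, hx⟩ : ↥W), (lmap a0 a1) x) ∈ Gc W a0 a1 := by
        rw [Gc, LinearMap.mem_graph_iff]; rfl
      exact hroot a0 a1 b0 b1 _ hmem (heq ▸ hmem)
    have h8 : Nat.card ↥W = 8 := by
      have : Fintype ↥W := Fintype.ofFinite _
      rw [Nat.card_eq_fintype_card, Module.card_eq_pow_finrank (K := ZMod 2) (V := ↥W), hW,
        ZMod.card]
      norm_num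
    have hle : Nat.card ↥W ≤ 2 := by
      calc Nat.card ↥W = (W : Set F16).ncard := Nat.card_coe_set_eq _
        _ ≤ Nat.card {x : F16 | (a0 - b0) * x + (a1 - b1) * x ^ 2 = 0} := by
            rw [Nat.card_coe_set_eq]
            exact Set.ncard_le_ncard hsub (Set.toFinite _)
        _ ≤ 2 := card_roots_le _ _ hc
    omega
  refine ⟨?_, hrank, ?_, ?_, ?_⟩
  · rw [Module.finrank_prod, hW, GaloisField.finrank 2 (by norm_num : (4:ℕ) ≠ 0)]
  · intro p q h
    obtain ⟨p1, p2⟩ := p; obtain ⟨q1, q2⟩ := q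
    exact hWne p1 p2 q1 q2 h
  · have hinj : Function.Injective (fun p : F16 × F16 => Gc W p.1 p.2) := by
      intro p q h
      obtain ⟨p1, p2⟩ := p; obtain ⟨q1, q2⟩ := q
      exact hWne p1 p2 q1 q2 h
    rw [← Nat.card_coe_set_eq, Nat.card_range_of_injective hinj, Nat.card_prod,
      hF16]
  · intro a0 a1 b0 b1 hne
    have hc : ¬(a0 - b0 = 0 ∧ a1 - b1 = 0) := by
      intro ⟨h1, h2⟩
      exact hne (by rw [Prod.mk.injEq]; exact ⟨sub_eq_zero.mp h1, sub_eq_zero.mp h2⟩)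
    set S := {x : F16 | (a0 - b0) * x + (a1 - b1) * x ^ 2 = 0} with hS
    have hφ : Function.Injective
        (fun v : ↥(Gc W a0 a1 ⊓ Gc W b0 b1) =>
          (⟨((v : ↥W × F16).1 : F16), hroot a0 a1 b0 b1 _ v.2.1 v.2.2⟩ : S)) := by
      intro v w h
      have h1 : ((v : ↥W × F16).1 : F16) = ((w : ↥W × F16).1 : F16) :=
        by simpa using congrArg Subtype.val h
      have hfst : (v : ↥W × F16).1 = (w : ↥W × F16).1 := Subtype.ext h1
      have hv := v.2.1; have hw := w.2.1
      simp only [Gc, LinearMap.mem_graph_iff] at hv hw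
      apply Subtype.ext
      apply Prod.ext hfst
      rw [hv, hw, hfst]
    have hcard : Nat.card ↥(Gc W a0 a1 ⊓ Gc W b0 b1) ≤ 2 :=
      (Nat.card_le_card_of_injective _ hφ).trans (card_roots_le _ _ hc)
    have hpow : Nat.card ↥(Gc W a0 a1 ⊓ Gc W b0 b1)
        = 2 ^ Module.finrank (ZMod 2) ↥(Gc W a0 a1 ⊓ Gc W b0 b1) := by
      have : Fintype ↥(Gc W a0 a1 ⊓ Gc W b0 b1) := Fintype.ofFinite _
      rw [Nat.card_eq_fintype_card,
        Module.card_eq_pow_finrank (K := ZMod 2) (V := ↥(Gc W a0 a1 ⊓ Gc W b0 b1)), ZMod.card]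
    rw [hpow] at hcard
    by_contra hgt
    push_neg at hgt
    have : 2 ^ 2 ≤ 2 ^ Module.finrank (ZMod 2) ↥(Gc W a0 a1 ⊓ Gc W b0 b1) :=
      Nat.pow_le_pow_right (by norm_num) hgt
    omega
end

section
/- The Gabidulin code G = {a_0x + a_1x^2 : a_0,a_1 ∈ F_16} admits a partition into {0}, the set F_16^× · x of nonzero maps x ↦ ax, the set F_16^× · x^2 of nonzero maps x ↦ ax^2, and the 15 sets {(u^2 x + u x^2)·v : u ∈ F_16^×} for v ∈ F_16^×; in particular the 15 cosets ∪_{v} (u_0^2 x + u_0 x^2 + T)v with Tr(u_0)=1 are pairwise disjoint and consist of 120 elements. -/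
/-- The absolute trace `F_16 → F_2 ⊆ F_16`, `Tr(u) = u + u^2 + u^4 + u^8`. -/
noncomputable def tr (u : F16) : F16 := u + u ^ 2 + u ^ 4 + u ^ 8

lemma F16_card : Nat.card F16 = 16 := GaloisField.card 2 4 (by norm_num)

noncomputable instance inst_s19 : Fintype F16 := Fintype.ofFinite F16

lemma F16_card' : Fintype.card F16 = 16 := by
  rw [← Nat.card_eq_fintype_card]; exact F16_card

lemma pow16 (x : F16) : x ^ 16 = x := by
  have := FiniteField.pow_card x
  rwa [F16_card'] at this

lemma sq_add (a b : F16) : (a + b) ^ 2 = a ^ 2 + b ^ 2 := CharTwo.add_sq a b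

lemma tr_add (a b : F16) : tr (a + b) = tr a + tr b := by
  unfold tr
  have h4 : ∀ x y : F16, (x + y) ^ 4 = x ^ 4 + y ^ 4 := by
    intro x y
    have : (x + y) ^ 4 = ((x + y) ^ 2) ^ 2 := by ring
    rw [this, sq_add, sq_add]; ring
  have h8 : (a + b) ^ 8 = a ^ 8 + b ^ 8 := by
    have : (a + b) ^ 8 = ((a + b) ^ 4) ^ 2 := by ring
    rw [this, h4, sq_add]; ring
  rw [sq_add, h4, h8]; ring

lemma tr_sq (u : F16) : tr u ^ 2 = tr u := by
  unfold tr
  rw [sq_add, sq_add, sq_add]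
  have : (u ^ 8) ^ 2 = u ^ 16 := by ring
  rw [this, pow16]; ring

lemma tr_zero_or_one (u : F16) : tr u = 0 ∨ tr u = 1 := by
  have h := tr_sq u
  have : tr u * (tr u - 1) = 0 := by linear_combination h
  rcases mul_eq_zero.mp this with h | h
  · exact Or.inl h
  · exact Or.inr (by rwa [sub_eq_zero] at h)

lemma tr_zero : tr 0 = 0 := by unfold tr; ring

lemma char2 (a : F16) : a + a = 0 := by
  have : (2 : F16) = 0 := by
    have := CharP.cast_eq_zero F16 2
    simpa using this
  calc a + a = 2 * a := by ring
  _ = 0 := by rw [this]; ring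

lemma tr_exists_one : ∃ w : F16, tr w = 1 := by
  by_contra h
  push_neg at h
  have hz : ∀ w : F16, tr w = 0 := fun w => (tr_zero_or_one w).resolve_right (h w)
  -- tr is given by a degree 8 polynomial with 16 roots, contradiction
  set p : Polynomial F16 := Polynomial.X + Polynomial.X ^ 2 + Polynomial.X ^ 4 + Polynomial.X ^ 8 with hp
  have hdeg : p.natDegree = 8 := by
    unfold p; compute_degree!
  have hpne : p ≠ 0 := fun h0 => by simp [h0] at hdeg
  have hroots : ∀ x : F16, x ∈ p.roots := by
    intro x
    rw [Polynomial.mem_roots hpne]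
    have : p.eval x = tr x := by simp [hp, tr]
    rw [Polynomial.IsRoot, this, hz]
  classical
  have hsub : (Finset.univ : Finset F16) ⊆ p.roots.toFinset :=
    fun a _ => Multiset.mem_toFinset.mpr (hroots a)
  have hle := Finset.card_le_card hsub
  have h2 := p.roots.toFinset_card_le
  have h3 := p.card_roots'
  rw [Finset.card_univ, F16_card'] at hle
  omega

lemma ncard_tr_zero : {w : F16 | tr w = 0}.ncard = 8 := by
  obtain ⟨w1, hw1⟩ := tr_exists_one
  set S0 := {w : F16 | tr w = 0} with hS0
  set S1 := {w : F16 | tr w = 1} with hS1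
  have himg : (fun w => w + w1) '' S0 = S1 := by
    ext w
    constructor
    · rintro ⟨x, hx, rfl⟩
      have hx' : tr x = 0 := hx
      show tr (x + w1) = 1
      rw [tr_add, hx', hw1, zero_add]
    · intro hw
      have hw' : tr w = 1 := hw
      refine ⟨w + w1, ?_, ?_⟩
      · show tr (w + w1) = 0
        rw [tr_add, hw', hw1]; exact char2 1
      · show w + w1 + w1 = w
        rw [add_assoc, char2, add_zero]
  have hcard01 : S0.ncard = S1.ncard := by
    rw [← himg]
    exact (Set.ncard_image_of_injective S0 (add_left_injective w1)).symm
  have hdisj : Disjoint S0 S1 := by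
    rw [Set.disjoint_left]
    intro a ha ha'
    rw [hS0] at ha; rw [hS1] at ha'
    simp at ha ha'
    rw [ha] at ha'
    exact one_ne_zero ha'.symm
  have hunion : S0 ∪ S1 = Set.univ := by
    ext w
    simp only [Set.mem_union, hS0, hS1, Set.mem_setOf_eq, Set.mem_univ, iff_true]
    exact tr_zero_or_one w
  have := Set.ncard_union_eq hdisj (Set.toFinite S0) (Set.toFinite S1)
  rw [hunion, Set.ncard_univ, F16_card, ← hcard01] at this
  omega

lemma cancel_uv {u v u' v' : F16} (hu : u ≠ 0) (hu' : u' ≠ 0) (hv : v ≠ 0)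
    (h1 : u ^ 2 * v = u' ^ 2 * v') (h2 : u * v = u' * v') : u = u' ∧ v = v' := by
  have huv : u * v ≠ 0 := mul_ne_zero hu hv
  have heq : u * (u * v) = u' * (u * v) := by
    calc u * (u * v) = u ^ 2 * v := by ring
    _ = u' ^ 2 * v' := h1
    _ = u' * (u' * v') := by ring
    _ = u' * (u * v) := by rw [h2]
  have huu : u = u' := mul_right_cancel₀ huv heq
  refine ⟨huu, ?_⟩
  rw [huu] at h2
  exact mul_left_cancel₀ hu' h2

/-- The coset `(u_0^2 x + u_0 x^2 + T)·v` of the Gabidulin code, identified with a subset of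
the coefficient space `F_16 × F_16`. -/
def coset (u0 v : F16) : Set (F16 × F16) :=
  {p | ∃ w : F16, tr w = 0 ∧ p = ((u0 + w) ^ 2 * v, (u0 + w) * v)}

/-- The Gabidulin code `G` (identified with `F_16 × F_16`) is partitioned into `{0}`,
`F_16^× · x`, `F_16^× · x^2` and the `15` sets `{(u^2 x + u x^2)v : u ∈ F_16^×}`,
`v ∈ F_16^×`; in particular, for `Tr(u_0) = 1` the `15` cosets `(u_0^2 x + u_0 x^2 + T)v`
are pairwise disjoint and together consist of `120` elements. -/
theorem gabidulin_partition :
    (∀ p : F16 × F16,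
        p = 0 ∨ (∃ a : F16, a ≠ 0 ∧ p = (a, 0)) ∨ (∃ a : F16, a ≠ 0 ∧ p = (0, a)) ∨
          ∃ u : F16, u ≠ 0 ∧ ∃ v : F16, v ≠ 0 ∧ p = (u ^ 2 * v, u * v)) ∧
      (∀ a0 a1 : F16, a0 ≠ 0 → a1 ≠ 0 →
        ∃! uv : F16 × F16, uv.1 ≠ 0 ∧ uv.2 ≠ 0 ∧ a0 = uv.1 ^ 2 * uv.2 ∧ a1 = uv.1 * uv.2) ∧
      ∀ u0 : F16, tr u0 = 1 →
        (∀ v v' : F16, v ≠ 0 → v' ≠ 0 → v ≠ v' → Disjoint (coset u0 v) (coset u0 v')) ∧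
          (⋃ v ∈ {v : F16 | v ≠ 0}, coset u0 v).ncard = 120 := by
  have key : ∀ u0 : F16, tr u0 = 1 → ∀ w : F16, tr w = 0 → u0 + w ≠ 0 := by
    intro u0 hu0 w hw h
    have : tr (u0 + w) = 1 := by rw [tr_add, hu0, hw]; ring
    rw [h, tr_zero] at this
    exact one_ne_zero this.symm
  refine ⟨?_, ?_, ?_⟩
  · intro p
    by_cases h1 : p.2 = 0
    · by_cases h0 : p.1 = 0
      · left; exact Prod.ext h0 h1
      · right; left; exact ⟨p.1, h0, Prod.ext rfl h1⟩
    · by_cases h0 : p.1 = 0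
      · right; right; left; exact ⟨p.2, h1, Prod.ext h0 rfl⟩
      · right; right; right
        refine ⟨p.1 / p.2, div_ne_zero h0 h1, p.2 ^ 2 / p.1, div_ne_zero (pow_ne_zero 2 h1) h0, ?_⟩
        refine Prod.ext ?_ ?_ <;> simp only <;> field_simp <;> ring
  · intro a0 a1 h0 h1
    refine ⟨(a0 / a1, a1 ^ 2 / a0), ⟨div_ne_zero h0 h1, div_ne_zero (pow_ne_zero 2 h1) h0, ?_, ?_⟩, ?_⟩
    · field_simp
    · field_simp
    · rintro ⟨u, v⟩ ⟨hu, hv, ha0, ha1⟩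
      simp only at hu hv ha0 ha1 ⊢
      have h1' : u ^ 2 * v = (a0/a1) ^ 2 * (a1^2/a0) := by
        rw [← ha0]; field_simp
      have h2' : u * v = (a0/a1) * (a1^2/a0) := by
        rw [← ha1]; field_simp
      obtain ⟨e1, e2⟩ := cancel_uv hu (div_ne_zero h0 h1) hv h1' h2'
      exact Prod.ext e1 e2
  · intro u0 hu0
    constructor
    · intro v v' hv hv' hvv'
      rw [Set.disjoint_left]
      rintro p ⟨w, hw, rfl⟩ ⟨w', hw', heq⟩
      have hne := key u0 hu0 w hw
      have hne' := key u0 hu0 w' hw'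
      have e1 : (u0 + w) ^ 2 * v = (u0 + w') ^ 2 * v' := congrArg Prod.fst heq
      have e2 : (u0 + w) * v = (u0 + w') * v' := congrArg Prod.snd heq
      obtain ⟨_, hvv⟩ := cancel_uv hne hne' hv e1 e2
      exact hvv' hvv
    · -- cardinality
      have himg : (⋃ v ∈ {v : F16 | v ≠ 0}, coset u0 v) =
          (fun q : F16 × F16 => (q.1 ^ 2 * q.2, q.1 * q.2)) ''
            ({u : F16 | tr u = 1} ×ˢ {v : F16 | v ≠ 0}) := by
        ext p
        simp only [Set.mem_iUnion, Set.mem_image, Set.mem_prod, Set.mem_setOf_eq, coset,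
          exists_prop]
        constructor
        · rintro ⟨v, hv, w, hw, rfl⟩
          refine ⟨(u0 + w, v), ⟨?_, hv⟩, rfl⟩
          rw [tr_add, hu0, hw]; ring
        · rintro ⟨⟨u, v⟩, ⟨hu, hv⟩, rfl⟩
          refine ⟨v, hv, u + u0, ?_, ?_⟩
          · rw [tr_add, hu, hu0]; exact char2 1
          · have : u0 + (u + u0) = u := by
              rw [add_comm u u0, ← add_assoc, char2, zero_add]
            rw [this]
      rw [himg]
      have hinj : Set.InjOn (fun q : F16 × F16 => (q.1 ^ 2 * q.2, q.1 * q.2))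
          ({u : F16 | tr u = 1} ×ˢ {v : F16 | v ≠ 0}) := by
        rintro ⟨u, v⟩ ⟨hu, hv⟩ ⟨u', v'⟩ ⟨hu', hv'⟩ heq
        simp only [Set.mem_setOf_eq] at hu hv hu' hv'
        have e1 : u ^ 2 * v = u' ^ 2 * v' := congrArg Prod.fst heq
        have e2 : u * v = u' * v' := congrArg Prod.snd heq
        have hune : u ≠ 0 := fun h => one_ne_zero (α := F16) (by rw [← hu, h, tr_zero])
        have hune' : u' ≠ 0 := fun h => one_ne_zero (α := F16) (by rw [← hu', h, tr_zero])
        obtain ⟨e3, e4⟩ := cancel_uv hune hune' hv e1 e2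
        exact Prod.ext e3 e4
      rw [Set.ncard_image_of_injOn hinj]
      have hA : {u : F16 | tr u = 1}.ncard = 8 := by
        have h1 : {u : F16 | tr u = 1} = (fun w => u0 + w) '' {w : F16 | tr w = 0} := by
          ext u
          simp only [Set.mem_image, Set.mem_setOf_eq]
          constructor
          · intro hu
            refine ⟨u0 + u, ?_, ?_⟩
            · rw [tr_add, hu0, hu]; exact char2 1
            · rw [← add_assoc, char2, zero_add]
          · rintro ⟨w, hw, rfl⟩
            rw [tr_add, hu0, hw]; ring
        rw [h1, Set.ncard_image_of_injective _ (add_right_injective u0)]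
        exact ncard_tr_zero
      have hB : {v : F16 | v ≠ 0}.ncard = 15 := by
        have h1 : {v : F16 | v ≠ 0} = Set.univ \ {0} := by
          ext v; simp
        rw [h1, Set.ncard_diff_singleton_of_mem (Set.mem_univ 0), Set.ncard_univ, F16_card]
      have hprod : ({u : F16 | tr u = 1} ×ˢ {v : F16 | v ≠ 0}).ncard =
          {u : F16 | tr u = 1}.ncard * {v : F16 | v ≠ 0}.ncard := by
        classical
        rw [Set.ncard_eq_toFinset_card', Set.ncard_eq_toFinset_card',
          Set.ncard_eq_toFinset_card', Set.toFinset_prod, Finset.card_product]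
      rw [hprod, hA, hB]
end
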